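/- If a shape S ⊆ G is linear (contained in a·⟨b⟩·c for some a,b,c ∈ G with b of infinite order) and |S| ≥ 2, then there exists a finite subset of G whose S-filling closure is infinite. -/

import Mathlib

open scoped symmDiff

/-- The left translate `gS` of a finite shape `S` in a group `G`. -/
def gset {G : Type*} [Group G] (g : G) (S : Finset G) : Set G :=
  (fun s => g * s) '' (S : Set G)

/-- A `(C,S)`-filling move: `P ⊊ Q`, some translate `gS` meets `P` in exactly
`|S| - 1` elements, and `Q = P ∪ gC`. -/
def FillMove {G : Type*} [Group G] (C S : Finset G) (P Q : Set G) : Prop :=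
  P ⊂ Q ∧ ∃ g : G, (P ∩ gset g S).ncard = S.card - 1 ∧ Q = P ∪ gset g C

/-- The `(C,S)`-filling closure: the union of all sets reachable from `P` by
finitely many filling moves. -/
def fillClosure {G : Type*} [Group G] (C S : Finset G) (P : Set G) : Set G :=
  {x | ∃ Q : Set G, Relation.ReflTransGen (FillMove C S) P Q ∧ x ∈ Q}


/-- A linear shape with at least two elements has a finite subset with infinite
`S`-filling closure. -/
theorem linear_infinite_fillClosure {G : Type*} [Group G] (S : Finset G)
    (hlin : ∃ a b c : G, ¬ IsOfFinOrder b ∧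
      (S : Set G) ⊆ {x : G | ∃ n : ℤ, x = a * b ^ n * c})
    (hcard : 2 ≤ S.card) :
    ∃ P : Finset G, (fillClosure S S (P : Set G)).Infinite := by
  classical
  obtain ⟨a, b, c, hb, hS⟩ := hlin
  have hbinj : Function.Injective (fun n : ℤ => b ^ n) :=
    injective_zpow_iff_not_isOfFinOrder.mpr hb
  set f : ℤ → G := fun n => a * b ^ n * c with hf
  have hfinj : Function.Injective f := by
    intro m n h
    apply hbinj
    simp only [hf] at h
    exact mul_left_cancel (mul_right_cancel h)
  -- exponent set
  set E : Finset ℤ := S.preimage f hfinj.injOn with hE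
  have himg : E.image f = S := by
    rw [hE, Finset.image_preimage]
    apply Finset.filter_true_of_mem
    intro s hs
    obtain ⟨n, hn⟩ := hS hs
    exact ⟨n, hn.symm⟩
  have hcardE : E.card = S.card := by
    rw [← himg]; exact (Finset.card_image_of_injective E hfinj).symm
  have hEcard2 : 2 ≤ E.card := hcardE ▸ hcard
  have hEne : E.Nonempty := Finset.card_pos.mp (by omega)
  set n0 : ℤ := E.min' hEne with hn0
  set nk : ℤ := E.max' hEne with hnk
  have hcoeS : (S : Set G) = f '' (E : Set ℤ) := by
    rw [← himg, Finset.coe_image]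
  -- the growing intervals
  set P : ℤ → Set G := fun M => f '' (Set.Icc n0 M) with hP
  -- key translation identity
  have hgf : ∀ m n : ℤ, (a * b ^ m * a⁻¹) * f n = f (n + m) := by
    intro m n
    simp only [hf, zpow_add]
    group
  -- there are at least two distinct exponents
  have hn0k : n0 < nk := by
    rcases Finset.one_lt_card.mp (by omega : 1 < E.card) with ⟨x, hx, y, hy, hxy⟩
    have h1 := E.min'_le x hx
    have h2 := E.max'_le  -- dummy
    rcases lt_or_gt_of_ne hxy with h | h
    · exact lt_of_le_of_lt (E.min'_le x hx) (lt_of_lt_of_le h (E.le_max' y hy))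
    · exact lt_of_le_of_lt (E.min'_le y hy) (lt_of_lt_of_le h (E.le_max' x hx))
  -- the filling step
  have hstep : ∀ M : ℤ, nk ≤ M → FillMove S S (P M) (P (M + 1)) := by
    intro M hM
    set m : ℤ := M + 1 - nk with hm
    have hm1 : 1 ≤ m := by omega
    have hfMnew : f (M + 1) ∉ P M := by
      rintro ⟨p, hp, hpe⟩
      have := hfinj hpe
      simp only [Set.mem_Icc] at hp
      omega
    constructor
    · constructor
      · exact Set.image_mono (f := f) (Set.Icc_subset_Icc_right (by omega))
      · intro hsub
        exact hfMnew (hsub ⟨M + 1, ⟨by omega, le_refl _⟩, rfl⟩)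
    · refine ⟨a * b ^ m * a⁻¹, ?_, ?_⟩
      · -- intersection has card S.card - 1
        have hset : P M ∩ gset (a * b ^ m * a⁻¹) S
            = ((E.erase nk).image (fun n => f (n + m)) : Set G) := by
          ext x
          simp only [Set.mem_inter_iff, gset, hcoeS, Finset.coe_image,
            Set.mem_image, Finset.mem_coe, Finset.mem_image, Finset.mem_erase,
            hP, Set.mem_Icc]
          constructor
          · rintro ⟨⟨p, ⟨hp1, hp2⟩, rfl⟩, y, ⟨n, hn, rfl⟩, hy⟩
            rw [hgf] at hy
            have hpn : p = n + m := hfinj hy.symm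
            refine ⟨n, ⟨?_, hn⟩, by rw [← hpn]⟩
            intro hne
            have := E.le_max' n hn
            omega
          · rintro ⟨n, ⟨hne, hn⟩, rfl⟩
            have h1 : n0 ≤ n := E.min'_le n hn
            have h2 : n ≤ nk := E.le_max' n hn
            have h3 : n ≠ nk := hne
            refine ⟨⟨n + m, ⟨by omega, by omega⟩, rfl⟩, f n, ⟨n, hn, rfl⟩, hgf m n⟩
        rw [hset, Set.ncard_coe_finset]
        have hinj2 : Function.Injective (fun n : ℤ => f (n + m)) := by
          intro x y h
          have := hfinj h
          omega
        rw [Finset.card_image_of_injective _ hinj2]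
        rw [Finset.card_erase_of_mem (E.max'_mem hEne), hcardE]
      · -- the union identity
        ext x
        simp only [Set.mem_union, gset, hcoeS, Set.mem_image, hP, Set.mem_Icc,
          Finset.mem_coe]
        constructor
        · rintro ⟨p, ⟨hp1, hp2⟩, rfl⟩
          rcases eq_or_lt_of_le hp2 with h | h
          · right
            refine ⟨f nk, ⟨nk, E.max'_mem hEne, rfl⟩, ?_⟩
            rw [hgf]
            congr 1
            omega
          · exact Or.inl ⟨p, ⟨hp1, by omega⟩, rfl⟩
        · rintro (⟨p, ⟨hp1, hp2⟩, rfl⟩ | ⟨y, ⟨n, hn, rfl⟩, rfl⟩)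
          · exact ⟨p, ⟨hp1, by omega⟩, rfl⟩
          · rw [hgf]
            have h1 : n0 ≤ n := E.min'_le n hn
            have h2 : n ≤ nk := E.le_max' n hn
            exact ⟨n + m, ⟨by omega, by omega⟩, rfl⟩
  -- reachability
  have hreach : ∀ M : ℤ, nk ≤ M →
      Relation.ReflTransGen (FillMove S S) (P nk) (P M) := by
    intro M hM
    refine Int.le_induction (motive := fun M _ => Relation.ReflTransGen (FillMove S S) (P nk) (P M)) ?_ ?_ M hM
    · exact Relation.ReflTransGen.refl
    · intro M hM ih
      exact ih.tail (hstep M hM)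
  refine ⟨(Finset.Icc n0 nk).image f, ?_⟩
  have hPnk : ((Finset.Icc n0 nk).image f : Set G) = P nk := by
    rw [Finset.coe_image, Finset.coe_Icc]
  have hsub : f '' (Set.Ici nk) ⊆ fillClosure S S ((Finset.Icc n0 nk).image f : Set G) := by
    rintro x ⟨M, hM, rfl⟩
    have hM' : nk ≤ M := hM
    exact ⟨P M, by rw [hPnk]; exact hreach M hM', ⟨M, ⟨by omega, le_refl _⟩, rfl⟩⟩
  exact Set.Infinite.mono hsub ((Set.Ici_infinite nk).image hfinj.injOn)
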